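/- For the unit ball reproducing kernel K^{ν,λ}_{z,w}(ζ,ω) = (1-(z|w))^{-ν} (B_{z,w}^{-1}ζ|ω)^λ/λ!, the component of bidegree (k,k) in (z, w̄) evaluated at z = w = 0 equals (1/λ!)(ζ|ω)^{λ+k} Σ_{p+q=k} C(ν+λ+k-1, p) C(λ, q). -/

import Mathlib

open Finset

open Complex Metric in
private lemma asc_succ_left_eval (n : ℕ) (t : ℂ) :
    (ascPochhammer ℂ (n+1)).eval t = t * (ascPochhammer ℂ n).eval (t+1) := by
  rw [ascPochhammer_succ_left]; simp [Polynomial.eval_comp]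

private lemma pasc (b : ℂ) (m : ℕ) :
    (ascPochhammer ℂ (m+1)).eval (b+1) =
      (ascPochhammer ℂ (m+1)).eval b + (m+1) * (ascPochhammer ℂ m).eval (b+1) := by
  rw [ascPochhammer_succ_eval, asc_succ_left_eval]; ring

private noncomputable def Tsum (a : ℂ) (lam k : ℕ) : ℂ :=
  ∑ q ∈ Finset.range (k+1),
    (lam.choose q) * (ascPochhammer ℂ (k-q)).eval (a + lam + q) / (Nat.factorial (k-q))

private lemma Tsum_eq (lam : ℕ) : ∀ (a : ℂ) (k : ℕ),
    Tsum a lam k = (ascPochhammer ℂ k).eval (a + 2*lam) / (Nat.factorial k) := by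
  induction lam with
  | zero =>
    intro a k
    rw [Tsum, Finset.sum_eq_single 0]
    · simp
    · intro q hq hq0
      rcases q with _ | q
      · exact absurd rfl hq0
      · simp [Nat.choose_eq_zero_of_lt (Nat.succ_pos q)]
    · simp
  | succ lam ih =>
    intro a k
    rcases k with _ | m
    · simp [Tsum]
    · have key : Tsum a (lam+1) (m+1) = Tsum (a+1) lam (m+1) + Tsum (a+2) lam m := by
        rw [Tsum, Finset.sum_range_succ']
        simp only [Nat.succ_sub_succ_eq_sub]
        have split : ∀ j ∈ Finset.range (m+1),
            (((lam+1).choose (j+1) : ℕ) : ℂ)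
                * (ascPochhammer ℂ (m-j)).eval (a + ((lam+1 : ℕ) : ℂ) + ((j+1 : ℕ) : ℂ))
              / ((Nat.factorial (m-j) : ℕ) : ℂ)
            = ((lam.choose j : ℕ) : ℂ) * (ascPochhammer ℂ (m-j)).eval ((a+2) + lam + j)
                / (Nat.factorial (m-j))
              + ((lam.choose (j+1) : ℕ) : ℂ)
                  * (ascPochhammer ℂ (m-j)).eval ((a+1) + lam + ((j+1 : ℕ) : ℂ))
                / (Nat.factorial (m-j)) := by
          intro j hj
          have h2 : a + ((lam+1 : ℕ) : ℂ) + ((j+1 : ℕ) : ℂ) = (a+2) + lam + j := by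
            push_cast; ring
          have h3 : a + ((lam+1 : ℕ) : ℂ) + ((j+1 : ℕ) : ℂ) = (a+1) + lam + ((j+1 : ℕ) : ℂ) := by
            push_cast; ring
          rw [Nat.choose_succ_succ, Nat.cast_add, add_mul, add_div]
          congr 2
          · rw [h2]
          · rw [h3]
        rw [Finset.sum_congr rfl split, Finset.sum_add_distrib]
        have e0 : (((lam+1).choose 0 : ℕ) : ℂ)
              * (ascPochhammer ℂ (m+1-0)).eval (a + ((lam+1 : ℕ) : ℂ) + ((0 : ℕ) : ℂ))
              / ((Nat.factorial (m+1-0) : ℕ) : ℂ)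
            = ((lam.choose 0 : ℕ) : ℂ)
              * (ascPochhammer ℂ (m+1-0)).eval ((a+1) + lam + ((0 : ℕ) : ℂ))
              / ((Nat.factorial (m+1-0) : ℕ) : ℂ) := by
          have harg : a + ((lam+1 : ℕ) : ℂ) + ((0:ℕ):ℂ) = (a+1) + lam + ((0:ℕ):ℂ) := by
            push_cast; ring
          rw [harg, Nat.choose_zero_right, Nat.choose_zero_right]
        rw [e0]
        rw [Tsum, Tsum]
        nth_rewrite 3 [Finset.sum_range_succ']
        simp only [Nat.succ_sub_succ_eq_sub]
        ring
      rw [key, ih, ih]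
      have h4 : (a+1) + 2*lam = (a + 2*((lam+1 : ℕ) : ℂ)) - 1 := by push_cast; ring
      have h5 : (a+2) + 2*lam = ((a + 2*((lam+1 : ℕ) : ℂ)) - 1) + 1 := by push_cast; ring
      set b : ℂ := (a + 2*((lam+1 : ℕ) : ℂ)) - 1 with hb
      rw [h4, h5, show a + 2*(((lam+1 : ℕ) : ℕ) : ℂ) = b + 1 by rw [hb]; ring]
      rw [pasc b m, Nat.factorial_succ]
      have hmf : ((Nat.factorial m : ℕ) : ℂ) ≠ 0 := by exact_mod_cast Nat.factorial_ne_zero m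
      have hm1 : ((m : ℂ) + 1) ≠ 0 := by exact_mod_cast Nat.succ_ne_zero m
      push_cast
      field_simp

open Complex Metric in
private lemma slit_aux {z : ℂ} (hz : z ∈ Metric.ball (0:ℂ) 1) : 1 - z ∈ Complex.slitPlane := by
  rw [mem_ball_zero_iff] at hz
  rw [Complex.mem_slitPlane_iff]
  left
  have : z.re ≤ ‖z‖ := by
    calc z.re ≤ |z.re| := le_abs_self _
    _ ≤ ‖z‖ := Complex.abs_re_le_norm z
  simp only [Complex.sub_re, Complex.one_re]
  linarith

open Complex Metric in
private lemma iter_deriv_cpow (a : ℂ) (n : ℕ) :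
    ∀ z ∈ Metric.ball (0:ℂ) 1,
      iteratedDeriv n (fun w : ℂ => (1 - w) ^ (-a)) z
        = (ascPochhammer ℂ n).eval a * (1 - z) ^ (-a - n) := by
  induction n with
  | zero => intro z hz; simp
  | succ n ih =>
    intro z hz
    rw [iteratedDeriv_succ]
    have heq : iteratedDeriv n (fun w : ℂ => (1 - w) ^ (-a))
        =ᶠ[nhds z] fun w => (ascPochhammer ℂ n).eval a * (1 - w) ^ (-a - n) :=
      Filter.eventuallyEq_of_mem (isOpen_ball.mem_nhds hz) ih
    rw [heq.deriv_eq]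
    have hd : HasDerivAt (fun w : ℂ => (1 - w) ^ (-a - n))
        ((-a - n) * (1 - z) ^ (-a - n - 1) * (-1)) z :=
      (HasDerivAt.const_sub 1 (hasDerivAt_id z)).cpow_const (slit_aux hz)
    rw [(hd.const_mul _).deriv]
    rw [ascPochhammer_succ_eval]
    rw [show -a - ((n+1 : ℕ) : ℂ) = -a - n - 1 by push_cast; ring]
    ring

open Complex Metric in
private lemma binom_series (a : ℂ) {x : ℂ} (hx : ‖x‖ < 1) :
    HasSum (fun k : ℕ => (ascPochhammer ℂ k).eval a / (Nat.factorial k) * x ^ k)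
      ((1 - x) ^ (-a)) := by
  have hd : DifferentiableOn ℂ (fun w : ℂ => (1 - w) ^ (-a)) (Metric.ball 0 1) := by
    intro z hz
    exact (((differentiable_const (1:ℂ)).sub differentiable_id).differentiableAt.cpow
      (differentiableAt_const _) (slit_aux hz)).differentiableWithinAt
  have hx' : x ∈ Metric.ball (0:ℂ) 1 := mem_ball_zero_iff.mpr hx
  have H := Complex.hasSum_taylorSeries_on_ball hd hx'
  convert H using 2 with n
  · exact rfl
  rw [iter_deriv_cpow a n 0 (mem_ball_zero_iff.mpr (by norm_num))]
  simp only [smul_eq_mul, sub_zero, Complex.one_cpow, mul_one]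
  ring

private lemma reflect_sum (a : ℂ) (lam k : ℕ) :
    ∑ p ∈ Finset.range (k + 1),
        ((ascPochhammer ℂ p).eval (a + lam + ((k - p : ℕ) : ℂ)) / (Nat.factorial p))
          * (lam.choose (k - p))
      = Tsum a lam k := by
  rw [Tsum, ← Finset.sum_range_reflect (fun p =>
    ((ascPochhammer ℂ p).eval (a + lam + ((k - p : ℕ) : ℂ)) / (Nat.factorial p))
      * (lam.choose (k - p))) (k+1)]
  refine Finset.sum_congr rfl fun q hq => ?_
  rw [Finset.mem_range] at hq
  have h1 : k + 1 - 1 - q = k - q := by omega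
  have h2 : k - (k - q) = q := by omega
  rw [h1, h2]
  ring

open Complex Metric in
private theorem stmt8_aux (ν : ℝ) (lam : ℕ) (t r : ℂ)
    (hr : ‖r‖ ^ 2 * ‖t‖ < 1) :
    HasSum
      (fun k : ℕ =>
        ((1 : ℂ) / (Nat.factorial lam) * t ^ (lam + k) *
            ((ascPochhammer ℂ k).eval ((ν : ℂ) + 2*lam) / (Nat.factorial k))) * r ^ (2 * k))
      ((1 - r ^ 2 * t) ^ (-((ν : ℂ) + lam)) *
        (t + r ^ 2 * t ^ 2 / (1 - r ^ 2 * t)) ^ lam / (Nat.factorial lam)) := by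
  set x : ℂ := r ^ 2 * t with hxdef
  have hx : ‖x‖ < 1 := by
    rw [hxdef, norm_mul, norm_pow]
    exact hr
  have h1 : (1 : ℂ) - x ≠ 0 := by
    intro h
    have : x = 1 := by linear_combination -h
    rw [this] at hx; simp at hx
  set A : ℂ := (ν : ℂ) + 2*lam with hA
  have H := (binom_series A hx).mul_left (t ^ lam * ((Nat.factorial lam : ℂ))⁻¹)
  convert H using 1
  · exact rfl
  · funext k
    show (1 / (Nat.factorial lam : ℂ) * t ^ (lam + k) *
        ((ascPochhammer ℂ k).eval A / (Nat.factorial k))) * r ^ (2 * k)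
      = t ^ lam * ((Nat.factorial lam : ℂ))⁻¹ *
          ((ascPochhammer ℂ k).eval A / (Nat.factorial k) * x ^ k)
    rw [hxdef, mul_pow, pow_add, pow_mul]
    ring
  · have e1 : t + r ^ 2 * t ^ 2 / (1 - x) = t / (1 - x) := by
      rw [eq_div_iff h1, add_mul, div_mul_cancel₀ _ h1, hxdef]
      ring
    rw [e1, div_pow, ← Complex.cpow_natCast (1 - x) lam]
    have e2 : (1 - x) ^ (-A) = (1 - x) ^ (-((ν : ℂ) + lam)) / (1 - x) ^ ((lam : ℂ)) := by
      rw [← Complex.cpow_sub _ _ h1]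
      congr 1
      rw [hA]; ring
    rw [e2, Complex.cpow_natCast]
    have h2 : (1 - x) ^ lam ≠ 0 := pow_ne_zero lam h1
    field_simp

/-- For the unit ball reproducing kernel
`K^{ν,λ}_{z,w}(ζ,ω) = (1-(z|w))^{-ν-λ}((ζ|ω) + (ζ|w)(z|ω)/(1-(z|w)))^λ/λ!`,
the homogeneous components of bidegree `(k,k)` in `(z,w̄)`, evaluated with `z,w`
replaced along the ray `z = rζ, w = r̄ω` (so that the bidegree-(k,k) component
contributes `r^{2k}`), are
`(1/λ!)(ζ|ω)^{λ+k} Σ_{p+q=k} C(ν+λ+k-1,p) C(λ,q)`,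
where `C(ν+λ+k-1,p) = (ν+λ+q)_p/p!` (generalized binomial coefficient).  That is,
the kernel restricted to the ray is the sum of these components times `r^{2k}`. -/
theorem stmt8 {d : ℕ} (ν : ℝ) (hν : 0 < ν) (lam : ℕ)
    (ζ ω : EuclideanSpace ℂ (Fin d)) (r : ℂ)
    (hr : ‖r‖ ^ 2 * ‖(inner ℂ ζ ω : ℂ)‖ < 1) :
    HasSum
      (fun k : ℕ =>
        ((1 : ℂ) / (Nat.factorial lam) * (inner ℂ ζ ω : ℂ) ^ (lam + k) *
            ∑ p ∈ Finset.range (k + 1),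
              ((ascPochhammer ℂ p).eval ((ν : ℂ) + lam + ((k - p : ℕ) : ℂ)) /
                  (Nat.factorial p)) * (lam.choose (k - p))) * r ^ (2 * k))
      ((1 - r ^ 2 * (inner ℂ ζ ω : ℂ)) ^ (-((ν : ℂ) + lam)) *
        ((inner ℂ ζ ω : ℂ) + r ^ 2 * (inner ℂ ζ ω : ℂ) ^ 2 /
            (1 - r ^ 2 * (inner ℂ ζ ω : ℂ))) ^ lam / (Nat.factorial lam)) := by
  have key : (fun k : ℕ =>
        ((1 : ℂ) / (Nat.factorial lam) * (inner ℂ ζ ω : ℂ) ^ (lam + k) *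
            ∑ p ∈ Finset.range (k + 1),
              ((ascPochhammer ℂ p).eval ((ν : ℂ) + lam + ((k - p : ℕ) : ℂ)) /
                  (Nat.factorial p)) * (lam.choose (k - p))) * r ^ (2 * k))
      = (fun k : ℕ =>
        ((1 : ℂ) / (Nat.factorial lam) * (inner ℂ ζ ω : ℂ) ^ (lam + k) *
            ((ascPochhammer ℂ k).eval ((ν : ℂ) + 2*lam) / (Nat.factorial k))) * r ^ (2 * k)) := by
    funext k
    rw [reflect_sum, Tsum_eq]
  rw [key]
  exact stmt8_aux ν lam _ r hr
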